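/- For any connected graph G, the cube graph G³ has a Hamiltonian cycle. (The SkipTree labeling provides a constructive proof: the ordering of vertices by SkipTree label forms a Hamiltonian cycle in G³.) -/

import Mathlib

open List

inductive RTree (V : Type*) where
  | node : V → List (RTree V) → RTree V

namespace RTree

def ham {V : Type*} : RTree V → List V
  | node v ts => v :: ((ts.attach.map (fun x => ham x.1)).flatten).reverse
decreasing_by simp [RTree.node.sizeOf_spec]; have := List.sizeOf_lt_of_mem x.2; omega

lemma ham_node {V : Type*} (v : V) (ts : List (RTree V)) :
    ham (node v ts) = v :: ((ts.map ham).flatten).reverse := by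
  unfold ham; simp

end RTree

set_option linter.unusedSectionVars false

section Build
variable {V : Type*} [Fintype V] [DecidableEq V]

noncomputable def children (r : V) (f : V → V) (v : V) : List V :=
  (Finset.univ.filter (fun c => f c = v ∧ c ≠ r)).toList

lemma mem_children {r : V} {f : V → V} {v c : V} :
    c ∈ children r f v ↔ f c = v ∧ c ≠ r := by
  simp [children]

noncomputable def build (r : V) (f : V → V) : ℕ → V → RTree V
  | 0, v => .node v []
  | n+1, v => .node v ((children r f v).map (build r f n))

@[simp] lemma build_zero (r : V) (f : V → V) (v : V) : build r f 0 v = .node v [] := rfl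

@[simp] lemma build_succ (r : V) (f : V → V) (n : ℕ) (v : V) :
    build r f (n+1) v = .node v ((children r f v).map (build r f n)) := rfl

def Anc (f : V → V) (v u : V) : Prop := ∃ k, f^[k] u = v

section
variable {G : SimpleGraph V} {r : V} {f : V → V}

lemma depth_f_le (hf1 : f r = r) (hf3 : ∀ v, v ≠ r → G.dist r (f v) + 1 = G.dist r v)
    (v : V) : G.dist r (f v) ≤ G.dist r v := by
  by_cases h : v = r
  · subst h; rw [hf1]
  · have := hf3 v h; omega

lemma depth_iter_le (hf1 : f r = r) (hf3 : ∀ v, v ≠ r → G.dist r (f v) + 1 = G.dist r v)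
    (k : ℕ) (v : V) : G.dist r (f^[k] v) ≤ G.dist r v := by
  induction k with
  | zero => simp
  | succ n ih =>
      rw [Function.iterate_succ_apply']
      exact le_trans (depth_f_le hf1 hf3 _) ih

lemma anc_depth_le (hf1 : f r = r) (hf3 : ∀ v, v ≠ r → G.dist r (f v) + 1 = G.dist r v)
    {v u : V} (h : Anc f v u) : G.dist r v ≤ G.dist r u := by
  obtain ⟨k, hk⟩ := h
  simpa [hk] using depth_iter_le (G := G) hf1 hf3 k u

lemma child_depth (hf3 : ∀ v, v ≠ r → G.dist r (f v) + 1 = G.dist r v)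
    {v c : V} (h : c ∈ children r f v) : G.dist r c = G.dist r v + 1 := by
  rw [mem_children] at h
  have := hf3 c h.2
  rw [h.1] at this
  omega

lemma anc_step (hf1 : f r = r) {v u : V} (h : Anc f v u) (hne : u ≠ v) :
    ∃ c, c ∈ children r f v ∧ Anc f c u := by
  obtain ⟨k, hk⟩ := h
  revert hne
  induction k generalizing u with
  | zero =>
      intro hne; exact absurd hk hne
  | succ n ih =>
      intro hne
      rcases eq_or_ne (f^[n] u) r with hr | hr
      · have hv : v = r := by
          rw [Function.iterate_succ_apply', hr, hf1] at hk; exact hk.symm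
        exact ih (hv ▸ hr) hne
      · refine ⟨f^[n] u, ?_, ⟨n, rfl⟩⟩
        rw [mem_children]
        exact ⟨by rwa [Function.iterate_succ_apply'] at hk, hr⟩

lemma mem_ham_build {n : ℕ} {v u : V} (h : u ∈ (build r f n v).ham) : Anc f v u := by
  induction n generalizing v with
  | zero =>
      rw [build_zero, RTree.ham_node] at h
      simp at h
      exact ⟨0, h⟩
  | succ n ih =>
      rw [build_succ, RTree.ham_node] at h
      simp only [List.mem_cons, List.mem_reverse, List.mem_flatten] at h
      rcases h with h | ⟨l, hl, hu⟩
      · exact ⟨0, h⟩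
      · simp only [List.mem_map] at hl
        obtain ⟨t, ⟨c, hc, rfl⟩, rfl⟩ := hl
        obtain ⟨k, hk⟩ := ih (v := c) hu
        refine ⟨k + 1, ?_⟩
        rw [Function.iterate_succ_apply', hk]
        exact (mem_children.1 hc).1

lemma dist_lt_card (hconn : G.Connected) (a b : V) : G.dist a b < Fintype.card V := by
  obtain ⟨p⟩ := hconn.preconnected a b
  have h1 : G.dist a b ≤ p.bypass.length := SimpleGraph.dist_le _
  have h2 := SimpleGraph.Walk.IsPath.length_lt p.bypass_isPath
  omega

lemma anc_mem_ham_build (hconn : G.Connected) (hf1 : f r = r)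
    (hf3 : ∀ v, v ≠ r → G.dist r (f v) + 1 = G.dist r v)
    {n : ℕ} {v u : V} (hfuel : Fintype.card V ≤ n + G.dist r v) (h : Anc f v u) :
    u ∈ (build r f n v).ham := by
  induction n generalizing v with
  | zero =>
      exact absurd hfuel (by simpa using dist_lt_card hconn r v)
  | succ n ih =>
      rw [build_succ, RTree.ham_node]
      rcases eq_or_ne u v with rfl | hne
      · exact List.mem_cons_self
      obtain ⟨c, hc, hanc⟩ := anc_step hf1 h hne
      have hd := child_depth hf3 hc
      have : u ∈ (build r f n c).ham := ih (by omega) hanc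
      simp only [List.mem_cons, List.mem_reverse, List.mem_flatten]
      exact Or.inr ⟨(build r f n c).ham, List.mem_map_of_mem (List.mem_map_of_mem hc), this⟩

end
end Build

section Build2
variable {V : Type*} [Fintype V] [DecidableEq V]
variable {G : SimpleGraph V} {r : V} {f : V → V}

lemma anc_children_eq (hf1 : f r = r) (hf3 : ∀ v, v ≠ r → G.dist r (f v) + 1 = G.dist r v)
    {v c c' : V} (hc : c ∈ children r f v) (hc' : c' ∈ children r f v) {u : V}
    (h : Anc f c u) (h' : Anc f c' u) : c = c' := by
  obtain ⟨i, hi⟩ := h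
  obtain ⟨j, hj⟩ := h'
  have key : ∀ (a b : V), a ∈ children r f v → b ∈ children r f v →
      ∀ (i j : ℕ), i ≤ j → f^[i] u = a → f^[j] u = b → a = b := by
    intro a b ha hb i j hij hi hj
    rcases Nat.eq_or_lt_of_le hij with rfl | hlt
    · rw [← hi, hj]
    · exfalso
      have hfa : f a = v := (mem_children.1 ha).1
      have h1 : f^[j - i] a = b := by
        rw [← hi, ← Function.iterate_add_apply]
        rw [Nat.sub_add_cancel (le_of_lt hlt), hj]
      obtain ⟨m, hm⟩ : ∃ m, j - i = m + 1 := ⟨j - i - 1, by omega⟩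
      rw [hm, Function.iterate_succ_apply, hfa] at h1
      have h2 : G.dist r b ≤ G.dist r v := by
        rw [← h1]; exact depth_iter_le hf1 hf3 m v
      have h3 := child_depth hf3 hb
      omega
  rcases le_total i j with hij | hij
  · exact key c c' hc hc' i j hij hi hj
  · exact (key c' c hc' hc j i hij hj hi).symm

lemma nodup_ham_build (hf1 : f r = r) (hf3 : ∀ v, v ≠ r → G.dist r (f v) + 1 = G.dist r v)
    (n : ℕ) (v : V) : (build r f n v).ham.Nodup := by
  induction n generalizing v with
  | zero => simp [RTree.ham_node]
  | succ n ih =>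
      rw [build_succ, RTree.ham_node, List.map_map]
      rw [List.nodup_cons, List.nodup_reverse, List.mem_reverse]
      constructor
      · intro hv
        obtain ⟨l, hl, hvl⟩ := List.mem_flatten.1 hv
        obtain ⟨c, hc, rfl⟩ := List.mem_map.1 hl
        have hanc : Anc f c v := mem_ham_build hvl
        have h1 : G.dist r c ≤ G.dist r v := anc_depth_le hf1 hf3 hanc
        have h2 := child_depth hf3 hc
        omega
      · rw [List.nodup_flatten]
        constructor
        · intro b hb
          obtain ⟨c, _, rfl⟩ := List.mem_map.1 hb
          exact ih c
        · rw [List.pairwise_map]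
          refine List.Pairwise.imp_of_mem ?_ (Finset.nodup_toList _ : (children r f v).Nodup)
          intro c c' hc hc' hne u hu hu'
          exact hne (anc_children_eq hf1 hf3 hc hc'
            (mem_ham_build hu) (mem_ham_build hu'))

lemma anc_root (hconn : G.Connected)
    (hf3 : ∀ v, v ≠ r → G.dist r (f v) + 1 = G.dist r v) :
    ∀ u, Anc f r u := by
  suffices H : ∀ d u, G.dist r u ≤ d → Anc f r u from fun u => H _ u le_rfl
  intro d
  induction d with
  | zero =>
      intro u hu
      have : u = r := ((hconn.dist_eq_zero_iff).1 (Nat.le_zero.1 hu)).symm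
      exact ⟨0, this.symm ▸ rfl⟩
  | succ d ih =>
      intro u hu
      rcases eq_or_ne u r with rfl | hne
      · exact ⟨0, rfl⟩
      · have h3 := hf3 u hne
        obtain ⟨k, hk⟩ := ih (f u) (by omega)
        exact ⟨k + 1, by rw [Function.iterate_succ_apply, hk]⟩

lemma dist_le_one_of_adj {a b : V} (h : G.Adj a b) : G.dist a b ≤ 1 := by
  have := SimpleGraph.dist_le h.toWalk
  simpa using this

lemma chain_flatten (hconn : G.Connected) (v : V) (bs : List (List V))
    (h : ∀ b ∈ bs, b ≠ [] ∧ List.Chain' (fun a b => G.dist a b ≤ 3) b ∧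
      (∀ x ∈ b.head?, G.dist v x ≤ 1) ∧ (∀ x ∈ b.getLast?, G.dist v x ≤ 2)) :
    List.Chain' (fun a b => G.dist a b ≤ 3) bs.flatten ∧
      (∀ x ∈ bs.flatten.head?, G.dist v x ≤ 1) ∧
      (∀ x ∈ bs.flatten.getLast?, G.dist v x ≤ 2) := by
  induction bs with
  | nil => simp; exact List.isChain_nil
  | cons b bs ih =>
      obtain ⟨hb0, hb1, hb2, hb3⟩ := h b List.mem_cons_self
      obtain ⟨ih1, ih2, ih3⟩ := ih (fun b hb => h b (List.mem_cons_of_mem _ hb))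
      rw [List.flatten_cons]
      refine ⟨?_, ?_, ?_⟩
      · refine List.IsChain.append hb1 ih1 ?_
        intro x hx y hy
        have d1 := hb3 x hx
        have d2 := ih2 y hy
        calc G.dist x y ≤ G.dist x v + G.dist v y := hconn.dist_triangle
          _ ≤ 3 := by rw [SimpleGraph.dist_comm] at d1; omega
      · rw [List.head?_append_of_ne_nil _ hb0]
        exact hb2
      · rcases eq_or_ne bs.flatten [] with hfl | hfl
        · rw [hfl, List.append_nil]; exact hb3
        · rw [List.getLast?_append_of_ne_nil _ hfl]; exact ih3

lemma build_ham_cons (n : ℕ) (v : V) :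
    ∃ l, (build r f n v).ham = v :: l := by
  cases n <;> exact ⟨_, RTree.ham_node _ _⟩

lemma chain_ham_build (hconn : G.Connected)
    (hf2 : ∀ v, v ≠ r → G.Adj v (f v))
    (hf3 : ∀ v, v ≠ r → G.dist r (f v) + 1 = G.dist r v)
    (n : ℕ) (v : V) :
    List.Chain' (fun a b => G.dist a b ≤ 3) (build r f n v).ham ∧
      (∀ x ∈ (build r f n v).ham.getLast?, G.dist v x ≤ 1) := by
  induction n generalizing v with
  | zero =>
      rw [build_zero, RTree.ham_node]
      simp [SimpleGraph.dist_self]; exact List.isChain_singleton v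
  | succ n ih =>
      rw [build_succ, RTree.ham_node, List.map_map]
      set bs := (children r f v).map (RTree.ham ∘ build r f n) with hbs
      have hblocks : ∀ b ∈ bs, b ≠ [] ∧ List.Chain' (fun a b => G.dist a b ≤ 3) b ∧
          (∀ x ∈ b.head?, G.dist v x ≤ 1) ∧ (∀ x ∈ b.getLast?, G.dist v x ≤ 2) := by
        intro b hb
        obtain ⟨c, hc, rfl⟩ := List.mem_map.1 hb
        simp only [Function.comp_apply]
        obtain ⟨hcv, hcr⟩ := mem_children.1 hc
        have hadj : G.Adj v c := ((hcv ▸ hf2 c hcr) : G.Adj c v).symm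
        have hd1 : G.dist v c ≤ 1 := dist_le_one_of_adj hadj
        obtain ⟨l, hl⟩ := build_ham_cons (r := r) (f := f) n c
        obtain ⟨ihc, ihl⟩ := ih c
        refine ⟨by simp [hl], ihc, ?_, ?_⟩
        · intro x hx
          simp only [hl, List.head?_cons, Option.mem_some_iff] at hx
          subst hx
          exact hd1
        · intro x hx
          have := ihl x hx
          calc G.dist v x ≤ G.dist v c + G.dist c x := hconn.dist_triangle
            _ ≤ 2 := by omega
      obtain ⟨h1, h2, h3⟩ := chain_flatten hconn v bs hblocks
      constructor
      · refine List.isChain_cons.2 ?_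
        constructor
        · intro y hy
          rw [List.head?_reverse] at hy
          have := h3 y hy
          omega
        · rw [List.isChain_reverse]
          refine List.IsChain.imp ?_ h1
          intro a b hab
          rw [SimpleGraph.dist_comm] at hab
          exact hab
      · rcases eq_or_ne bs.flatten [] with hfl | hfl
        · rw [hfl]
          simp [SimpleGraph.dist_self]
        · have : bs.flatten.reverse ≠ [] := by simpa using hfl
          rw [show (v :: bs.flatten.reverse) = [v] ++ bs.flatten.reverse from rfl,
            List.getLast?_append_of_ne_nil _ this, List.getLast?_reverse]
          exact h2

end Build2

section WalkBits
variable {V : Type*} {G' : SimpleGraph V}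

def mkWalk : (a : V) → (l : List V) → List.Chain G'.Adj a l → G'.Walk a (l.getLastD a)
  | _, [], _ => SimpleGraph.Walk.nil
  | a, b :: l, h =>
    (SimpleGraph.Walk.cons (List.chain_cons.1 h).1
      (mkWalk b l (List.chain_cons.1 h).2)).copy rfl List.getLastD_cons.symm

lemma mkWalk_support : ∀ (a : V) (l : List V) (h : List.Chain G'.Adj a l),
    (mkWalk a l h).support = a :: l
  | _, [], _ => rfl
  | a, b :: l, h => by
    rw [mkWalk, SimpleGraph.Walk.support_copy, SimpleGraph.Walk.support_cons]
    exact congrArg (a :: ·) (mkWalk_support b l _)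

lemma not_edge_of_path {a b : V} (q : G'.Walk a b) (hq : q.IsPath) (hlen : 2 ≤ q.length) :
    s(a, b) ∉ q.edges := by
  intro he
  cases q with
  | nil => simp at he
  | @cons _ x _ h q' =>
      rw [SimpleGraph.Walk.edges_cons, List.mem_cons] at he
      rw [SimpleGraph.Walk.cons_isPath_iff] at hq
      rcases he with he | he
      · rw [Sym2.eq_iff] at he
        rcases he with ⟨-, rfl⟩ | ⟨rfl, rfl⟩
        · have : q' = SimpleGraph.Walk.nil := by
            have := SimpleGraph.Path.loop_eq ⟨q', hq.1⟩
            exact congrArg Subtype.val this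
          rw [SimpleGraph.Walk.length_cons, this] at hlen
          simp at hlen
        · exact h.ne rfl
      · exact hq.2 (SimpleGraph.Walk.fst_mem_support_of_mem_edges q' he)

end WalkBits

/-- The cube `G³` of a graph `G`: same vertex set, with two distinct vertices adjacent iff
their distance in `G` is at most `3`. -/
def cubeGraph {V : Type*} (G : SimpleGraph V) : SimpleGraph V where
  Adj u v := u ≠ v ∧ G.Reachable u v ∧ G.dist u v ≤ 3
  symm := by
    constructor
    intro u v ⟨h1, h2, h3⟩
    exact ⟨h1.symm, h2.symm, by rwa [SimpleGraph.dist_comm]⟩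
  loopless := ⟨fun v h => h.1 rfl⟩

/-- For any connected graph `G` (on at least three vertices, so that a
cycle can exist), the cube graph `G³` has a Hamiltonian cycle. -/
theorem cube_hamiltonian {V : Type*} [Fintype V] [DecidableEq V]
    (G : SimpleGraph V) (hconn : G.Connected) (hcard : 3 ≤ Fintype.card V) :
    ∃ (v : V) (p : (cubeGraph G).Walk v v), p.IsHamiltonianCycle := by
  classical
  obtain ⟨r⟩ : Nonempty V := Fintype.card_pos_iff.1 (by omega)
  have hex : ∀ v, v ≠ r → ∃ w, G.Adj v w ∧ G.dist r w + 1 = G.dist r v := by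
    intro v hv
    obtain ⟨p, hp⟩ := hconn.exists_walk_length_eq_dist v r
    have hnil : ¬ p.Nil := SimpleGraph.Walk.not_nil_of_ne hv
    refine ⟨p.getVert 1, p.adj_snd hnil, ?_⟩
    have h1 : G.dist (p.getVert 1) r ≤ p.tail.length := SimpleGraph.dist_le p.tail
    have h2 := SimpleGraph.Walk.length_tail_add_one hnil
    have h3 : G.dist r v ≤ G.dist r (p.getVert 1) + G.dist (p.getVert 1) v :=
      hconn.dist_triangle
    have h4 : G.dist (p.getVert 1) v ≤ 1 :=
      dist_le_one_of_adj (p.adj_snd hnil).symm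
    have h5 : G.dist r v = G.dist v r := SimpleGraph.dist_comm
    have h6 : G.dist r (p.getVert 1) = G.dist (p.getVert 1) r := SimpleGraph.dist_comm
    have h7 : 1 ≤ G.dist r v := by
      have := hconn.pos_dist_of_ne (Ne.symm hv)
      omega
    omega
  obtain ⟨f, hf⟩ : ∃ f : V → V, f = fun v => if h : v = r then r else (hex v h).choose :=
    ⟨_, rfl⟩
  have hf1 : f r = r := by simp [hf]
  have hf2 : ∀ v, v ≠ r → G.Adj v (f v) := by
    intro v hv
    rw [hf]
    simp only [dif_neg hv]
    exact (hex v hv).choose_spec.1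
  have hf3 : ∀ v, v ≠ r → G.dist r (f v) + 1 = G.dist r v := by
    intro v hv
    rw [hf]
    simp only [dif_neg hv]
    exact (hex v hv).choose_spec.2
  obtain ⟨L, hLdef⟩ : ∃ L, L = (build r f (Fintype.card V) r).ham := ⟨_, rfl⟩
  have hmemL : ∀ u, u ∈ L := by
    rw [hLdef]
    exact fun u => anc_mem_ham_build hconn hf1 hf3
      (by rw [SimpleGraph.dist_self]; omega) (anc_root hconn hf3 u)
  have hnodup : L.Nodup := by rw [hLdef]; exact nodup_ham_build hf1 hf3 _ r
  obtain ⟨hchain, hlast⟩ := chain_ham_build hconn hf2 hf3 (Fintype.card V) r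
  rw [← hLdef] at hchain hlast
  have hlen : L.length = Fintype.card V := by
    have h1 : L.toFinset = Finset.univ := by
      ext u; simp [hmemL u]
    have h2 := List.toFinset_card_of_nodup hnodup
    rw [h1] at h2
    rw [← h2, Finset.card_univ]
  have hcube : List.Chain' (cubeGraph G).Adj L := by
    have hne2 : List.Chain' (fun a b : V => a ≠ b) L := List.Pairwise.isChain hnodup
    simp only [List.Chain'] at hchain hne2 ⊢
    rw [List.isChain_iff_getElem] at hchain hne2 ⊢
    intro i hi
    exact ⟨hne2 i hi, hconn.preconnected _ _, hchain i hi⟩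
  obtain ⟨l0, hL⟩ := build_ham_cons (r := r) (f := f) (Fintype.card V) r
  rw [← hLdef] at hL
  have hchain0 : List.Chain (cubeGraph G).Adj r l0 := by
    rw [hL] at hcube
    exact hcube
  obtain ⟨w, hwdef⟩ : ∃ w, l0.getLastD r = w := ⟨_, rfl⟩
  obtain ⟨q, hsupp⟩ : ∃ q : (cubeGraph G).Walk r w, q.support = L :=
    ⟨(mkWalk r l0 hchain0).copy rfl hwdef, by
      rw [SimpleGraph.Walk.support_copy, mkWalk_support, hL]⟩
  have hqpath : q.IsPath := SimpleGraph.Walk.IsPath.mk' (by rw [hsupp]; exact hnodup)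
  have hqlen : 2 ≤ q.length := by
    have := SimpleGraph.Walk.length_support q
    rw [hsupp, hlen] at this
    omega
  have hl0 : l0 ≠ [] := by
    intro h
    rw [hL, h] at hlen
    simp at hlen
    omega
  have hwmem : w ∈ l0 := by
    rw [← hwdef, List.getLastD_eq_getLast?, List.getLast?_eq_getLast hl0]
    simp [List.getLast_mem]
  have hwr : w ≠ r := by
    intro h
    rw [hL, List.nodup_cons] at hnodup
    exact hnodup.1 (h ▸ hwmem)
  have hdrw : G.dist r w ≤ 1 := by
    apply hlast
    rw [hL, List.getLast?_cons, ← List.getLastD_eq_getLast?, hwdef]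
    rfl
  have hadj : (cubeGraph G).Adj r w :=
    ⟨Ne.symm hwr, hconn.preconnected r w, by omega⟩
  refine ⟨r, SimpleGraph.Walk.cons hadj q.reverse, ?_⟩
  have hcycle : (SimpleGraph.Walk.cons hadj q.reverse).IsCycle := by
    rw [SimpleGraph.Walk.cons_isCycle_iff]
    refine ⟨hqpath.reverse, ?_⟩
    rw [SimpleGraph.Walk.edges_reverse, List.mem_reverse]
    exact not_edge_of_path q hqpath hqlen
  rw [SimpleGraph.Walk.isHamiltonianCycle_isCycle_and_isHamiltonian_tail]
  refine ⟨hcycle, ?_⟩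
  intro a
  have hs : (SimpleGraph.Walk.cons hadj q.reverse).tail.support = L.reverse := by
    rw [SimpleGraph.Walk.tail_cons]
    refine (SimpleGraph.Walk.support_copy ..).trans ?_
    rw [SimpleGraph.Walk.support_reverse, hsupp]
  rw [hs, List.count_reverse]
  exact List.count_eq_one_of_mem hnodup (hmemL a)
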